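/- Fix x, k ∈ [N] and numbers s_j ∈ [j] for all j < k. For a uniformly random π ∈ S_N, the conditional probability Pr(k ∈ A(π,x) | t_j(π) = s_j for all j < k) equals 1/k if x < k, equals 1 if x = k, and equals 0 if x > k; in particular, the unconditional probability Pr(k ∈ A(π,x)) takes these same values, and the events {k ∈ A(π,x)} for k ∈ [N] are mutually independent under the uniform measure on S_N. -/

import Mathlib

open scoped Classical

/-- Embedding of `Fin (k+1)` into `Fin N` (where `k : Fin N`). -/
def emb {N : ℕ} (k : Fin N) (t : Fin (k.val + 1)) : Fin N :=
  ⟨t.val, lt_of_lt_of_le t.isLt k.isLt⟩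

/-- `Phi t = (N t_N)(N−1 t_{N−1})⋯(2 t_2)(1 t_1)`, the strictly monotone factorization map. -/
def Phi {N : ℕ} (t : ∀ k : Fin N, Fin (k.val + 1)) : Equiv.Perm (Fin N) :=
  ((List.finRange N).reverse.map fun k => Equiv.swap k (emb k (t k))).prod

instance {N : ℕ} : Nonempty (∀ k : Fin N, Fin (k.val + 1)) := ⟨fun _ => 0⟩

/-- `tof π` is the tuple `(t_1(π),…,t_N(π))` of the strictly monotone factorization of `π`. -/
noncomputable def tof {N : ℕ} (π : Equiv.Perm (Fin N)) : ∀ k : Fin N, Fin (k.val + 1) :=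
  Function.invFun Phi π

/-- `phead π k` is `π_{<k} = (k−1 t_{k−1})⋯(1 t_1)`. -/
noncomputable def phead {N : ℕ} (π : Equiv.Perm (Fin N)) (k : Fin N) : Equiv.Perm (Fin N) :=
  (((List.finRange N).reverse.filter fun j => decide (j < k)).map
    fun j => Equiv.swap j (emb j (tof π j))).prod

/-- `k` is active for `(π,x)`, i.e. `π_{<k}(x) ∈ {k, t_k(π)}`. -/
noncomputable def isActive {N : ℕ} (π : Equiv.Perm (Fin N)) (x k : Fin N) : Prop :=
  phead π k x = k ∨ phead π k x = emb k (tof π k)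


/-- tuple-level phead -/
def pheadT {N : ℕ} (t : ∀ k : Fin N, Fin (k.val + 1)) (k : Fin N) : Equiv.Perm (Fin N) :=
  (((List.finRange N).reverse.filter fun j => decide (j < k)).map
    fun j => Equiv.swap j (emb j (t j))).prod

lemma filter_not_append_filter {α : Type*} (p : α → Bool) :
    ∀ (l : List α), l.Pairwise (fun a b => p a → p b) →
      l.filter (fun a => !p a) ++ l.filter p = l := by
  intro l
  induction l with
  | nil => intro _; simp
  | cons a tl ih =>
    intro h
    rw [List.pairwise_cons] at h
    obtain ⟨ha, htl⟩ := h
    by_cases hpa : p a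
    · have h1 : tl.filter (fun a => !p a) = [] := by
        rw [List.filter_eq_nil_iff]
        intro b hb
        simp [ha b hb hpa]
      have h2 : tl.filter p = tl := by
        rw [List.filter_eq_self]
        intro b hb; exact ha b hb hpa
      simp [List.filter_cons, hpa, h1, h2]
    · simp only [List.filter_cons, hpa]
      simp only [Bool.not_eq_true] at hpa
      simp [hpa, ih htl]

def ptailT {N : ℕ} (t : ∀ k : Fin N, Fin (k.val + 1)) (k : Fin N) : Equiv.Perm (Fin N) :=
  (((List.finRange N).reverse.filter fun j => decide (k < j)).map
    fun j => Equiv.swap j (emb j (t j))).prod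

lemma list_split {N : ℕ} (k : Fin N) :
    ((List.finRange N).reverse.filter fun j => decide (k < j)) ++ k ::
      ((List.finRange N).reverse.filter fun j => decide (j < k)) = (List.finRange N).reverse := by
  set L := (List.finRange N).reverse with hL
  have hpw : L.Pairwise (· > ·) := by
    rw [hL, List.pairwise_reverse]
    exact List.pairwise_lt_finRange N
  have h1 : L.filter (fun j => !decide (j < k)) ++ L.filter (fun j => decide (j < k)) = L := by
    apply filter_not_append_filter
    exact hpw.imp_of_mem (by intro a b _ _ hab h; simp at h ⊢; omega)
  set A := L.filter (fun j => !decide (j < k)) with hA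
  have hpwA : A.Pairwise (· > ·) := hpw.filter _
  have h2 : A.filter (fun j => !decide (j = k)) ++ A.filter (fun j => decide (j = k)) = A := by
    apply filter_not_append_filter
    refine hpwA.imp_of_mem ?_
    intro a b ha hb hab hak
    exfalso
    have hbA := hb
    rw [hA, List.mem_filter] at hbA
    have : ¬ (b < k) := by simpa using hbA.2
    simp at hak
    subst hak
    exact this hab
  have h3 : A.filter (fun j => !decide (j = k)) = L.filter (fun j => decide (k < j)) := by
    rw [hA, List.filter_filter]
    apply List.filter_congr
    intro a _
    by_cases h1 : a < k
    · have h3 : ¬ k < a := not_lt.mpr h1.le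
      simp [h1, h3]
    · by_cases h2 : a = k
      · subst h2; simp
      · have h3 : k < a := lt_of_le_of_ne (not_lt.mp h1) (Ne.symm h2)
        simp [h1, h2, h3]
  have h4 : A.filter (fun j => decide (j = k)) = [k] := by
    rw [hA, List.filter_filter]
    have : (L.filter fun a => decide (a = k) && !decide (a < k)) = L.filter (fun a => decide (a = k)) := by
      apply List.filter_congr
      intro a _
      by_cases h : a = k
      · subst h; simp
      · simp [h]
    rw [this, List.filter_eq, List.count_eq_one_of_mem (by rw [hL, List.nodup_reverse]; exact List.nodup_finRange N) (by rw [hL]; simp [List.mem_reverse])]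
    rfl
  calc L.filter (fun j => decide (k < j)) ++ k :: L.filter (fun j => decide (j < k))
      = (A.filter (fun j => !decide (j = k)) ++ A.filter (fun j => decide (j = k)))
          ++ L.filter (fun j => decide (j < k)) := by rw [h3, h4]; simp
    _ = A ++ L.filter (fun j => decide (j < k)) := by rw [h2]
    _ = L := h1

lemma Phi_decomp {N : ℕ} (t : ∀ k : Fin N, Fin (k.val + 1)) (k : Fin N) :
    Phi t = ptailT t k * (Equiv.swap k (emb k (t k)) * pheadT t k) := by
  rw [Phi, ← list_split k]
  simp [List.prod_append, ptailT, pheadT]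

lemma prod_swaps_fix {N : ℕ} (t : ∀ k : Fin N, Fin (k.val + 1)) (k : Fin N) :
    ∀ (l : List (Fin N)), (∀ j ∈ l, j < k) → ∀ z : Fin N, k ≤ z →
      ((l.map fun j => Equiv.swap j (emb j (t j))).prod) z = z := by
  intro l
  induction l with
  | nil => intro _ z _; simp
  | cons a tl ih =>
    intro h z hz
    simp only [List.map_cons, List.prod_cons, Equiv.Perm.mul_apply]
    rw [ih (fun j hj => h j (List.mem_cons_of_mem a hj)) z hz]
    apply Equiv.swap_apply_of_ne_of_ne
    · intro hza; exact absurd (hza ▸ hz) (not_le.mpr (h a (List.mem_cons_self)))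
    · intro hze
      have h2 : a < k := h a (List.mem_cons_self)
      have h1 : z.val < k.val := by
        have : z.val = (t a).val := congrArg Fin.val hze
        have := Nat.lt_succ_iff.mp (t a).isLt
        have h2' : a.val < k.val := h2
        omega
      exact absurd h1 (not_lt.mpr hz)

lemma pheadT_fix {N : ℕ} (t : ∀ k : Fin N, Fin (k.val + 1)) (k : Fin N) (z : Fin N) (hz : k ≤ z) :
    pheadT t k z = z := by
  apply prod_swaps_fix
  · intro j hj
    rw [List.mem_filter] at hj
    simpa using hj.2
  · exact hz

lemma pheadT_lt {N : ℕ} (t : ∀ k : Fin N, Fin (k.val + 1)) (k : Fin N) (z : Fin N) (hz : z < k) :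
    pheadT t k z < k := by
  by_contra h
  rw [not_lt] at h
  have := pheadT_fix t k (pheadT t k z) h
  have := (pheadT t k).injective this
  rw [this] at h
  exact absurd hz (not_lt.mpr h)

lemma pheadT_congr {N : ℕ} {t t' : ∀ k : Fin N, Fin (k.val + 1)} (k : Fin N)
    (h : ∀ j, j < k → t j = t' j) : pheadT t k = pheadT t' k := by
  unfold pheadT
  congr 1
  apply List.map_congr_left
  intro j hj
  rw [List.mem_filter] at hj
  rw [h j (by simpa using hj.2)]

lemma ptailT_congr {N : ℕ} {t t' : ∀ k : Fin N, Fin (k.val + 1)} (k : Fin N)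
    (h : ∀ j, k < j → t j = t' j) : ptailT t k = ptailT t' k := by
  unfold ptailT
  congr 1
  apply List.map_congr_left
  intro j hj
  rw [List.mem_filter] at hj
  rw [h j (by simpa using hj.2)]

lemma Phi_injective {N : ℕ} : Function.Injective (Phi (N := N)) := by
  intro t t' h
  funext k
  -- downward strong induction on k
  suffices H : ∀ n : ℕ, ∀ k : Fin N, N - k.val ≤ n → t k = t' k by
    exact H N k (Nat.sub_le _ _)
  intro n
  induction n with
  | zero => intro k hk; exact absurd hk (by have := k.isLt; omega)
  | succ n ih =>
    intro k hk
    have habove : ∀ j, k < j → t j = t' j := by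
      intro j hj
      exact ih j (by have := hj; rw [Fin.lt_iff_val_lt_val] at this; omega)
    have hdec := Phi_decomp t k
    have hdec' := Phi_decomp t' k
    rw [h] at hdec
    rw [ptailT_congr k habove] at hdec
    have hswap : (Equiv.swap k (emb k (t k)) * pheadT t k) =
        (Equiv.swap k (emb k (t' k)) * pheadT t' k) :=
      mul_left_cancel (hdec.symm.trans hdec')
    have := congrArg (fun σ : Equiv.Perm (Fin N) => σ k) hswap
    simp only [Equiv.Perm.mul_apply] at this
    rw [pheadT_fix t k k le_rfl, pheadT_fix t' k k le_rfl, Equiv.swap_apply_left,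
      Equiv.swap_apply_left] at this
    have hval : (emb k (t k)).val = (emb k (t' k)).val := congrArg Fin.val this
    exact Fin.ext hval

lemma card_tuples {N : ℕ} : Fintype.card (∀ k : Fin N, Fin (k.val + 1)) = N.factorial := by
  rw [Fintype.card_pi]
  simp only [Fintype.card_fin]
  rw [Fin.prod_univ_eq_prod_range (fun i => i + 1) N]
  exact Finset.prod_range_add_one_eq_factorial N

lemma Phi_bijective {N : ℕ} : Function.Bijective (Phi (N := N)) := by
  rw [Fintype.bijective_iff_injective_and_card]
  exact ⟨Phi_injective, by rw [card_tuples, Fintype.card_perm, Fintype.card_fin]⟩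

lemma tof_Phi {N : ℕ} (t : ∀ k : Fin N, Fin (k.val + 1)) : tof (Phi t) = t :=
  Function.leftInverse_invFun Phi_injective t

lemma Phi_tof {N : ℕ} (π : Equiv.Perm (Fin N)) : Phi (tof π) = π :=
  Function.rightInverse_invFun Phi_bijective.surjective π

open Finset in
lemma card_transfer {N : ℕ} (Q : (∀ k : Fin N, Fin (k.val + 1)) → Prop) [DecidablePred Q]
    [∀ π : Equiv.Perm (Fin N), Decidable (Q (tof π))] :
    (univ.filter fun π : Equiv.Perm (Fin N) => Q (tof π)).card = (univ.filter Q).card := by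
  apply Finset.card_bij (fun π _ => tof π)
  · intro π hπ
    rw [mem_filter] at hπ ⊢
    exact ⟨mem_univ _, hπ.2⟩
  · intro a ha b hb hab
    have := congrArg Phi hab
    rwa [Phi_tof, Phi_tof] at this
  · intro t ht
    rw [mem_filter] at ht
    exact ⟨Phi t, by rw [mem_filter]; exact ⟨mem_univ _, by rw [tof_Phi]; exact ht.2⟩, tof_Phi t⟩

open Finset in
/-- Master counting lemma: constraints each determined by strictly earlier coordinates. -/
lemma master {N : ℕ} (C : Finset (Fin N))
    (g : (∀ j : Fin N, Fin (j.val + 1)) → ∀ k : Fin N, Fin (k.val + 1))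
    (hg : ∀ (k : Fin N) t t', (∀ j, j < k → t j = t' j) → g t k = g t' k) :
    (univ.filter fun t : ∀ j : Fin N, Fin (j.val + 1) => ∀ k ∈ C, t k = g t k).card
      * ∏ k ∈ C, (k.val + 1) = N.factorial := by
  classical
  induction C using Finset.induction_on_max with
  | empty =>
    simp only [Finset.notMem_empty, false_implies, implies_true, Finset.filter_true_of_mem,
      Finset.prod_empty, mul_one, Finset.card_univ]
    exact card_tuples
  | insert m s hs ih =>
    -- condition update invariance
    have hfix : ∀ (t : ∀ j : Fin N, Fin (j.val + 1)) (a : Fin (m.val + 1)) (k : Fin N), k < m →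
        (Function.update t m a k = t k ∧ g (Function.update t m a) k = g t k) := by
      intro t a k hk
      constructor
      · exact Function.update_of_ne (ne_of_lt hk) _ _
      · apply hg
        intro j hj
        exact Function.update_of_ne (ne_of_lt (hj.trans hk)) _ _
    have hgm : ∀ (t : ∀ j : Fin N, Fin (j.val + 1)) (a : Fin (m.val + 1)),
        g (Function.update t m a) m = g t m := by
      intro t a
      apply hg
      intro j hj
      exact Function.update_of_ne (ne_of_lt hj) _ _
    set D : (∀ j : Fin N, Fin (j.val + 1)) → Prop := fun t => ∀ k ∈ s, t k = g t k with hD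
    have hDupd : ∀ t a, D (Function.update t m a) ↔ D t := by
      intro t a
      constructor
      · intro h k hk
        have h1 := (hfix t a k (hs k hk)).1
        have h2 := (hfix t a k (hs k hk)).2
        have := h k hk
        rwa [h1, h2] at this
      · intro h k hk
        rw [(hfix t a k (hs k hk)).1, (hfix t a k (hs k hk)).2]
        exact h k hk
    -- fiberwise count
    have key : ∀ a : Fin (m.val + 1),
        (univ.filter fun t : ∀ j : Fin N, Fin (j.val + 1) => t m = a ∧ D t).card
          = (univ.filter fun t : ∀ j : Fin N, Fin (j.val + 1) => t m = g t m ∧ D t).card := by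
      intro a
      apply Finset.card_bij' (fun t _ => Function.update t m (g t m))
        (fun t _ => Function.update t m a)
      · intro t ht
        rw [mem_filter] at ht ⊢
        refine ⟨mem_univ _, ?_, (hDupd t _).mpr ht.2.2⟩
        rw [Function.update_self, hgm]
      · intro t ht
        rw [mem_filter] at ht ⊢
        exact ⟨mem_univ _, Function.update_self _ _ _, (hDupd t _).mpr ht.2.2⟩
      · intro t ht
        rw [mem_filter] at ht
        rw [Function.update_idem]
        have : t m = a := ht.2.1
        rw [← this, Function.update_eq_self]
      · intro t ht
        rw [mem_filter] at ht
        rw [Function.update_idem, hgm t a, ← ht.2.1, Function.update_eq_self]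
    have hsplit : (univ.filter (D ·)).card
        = ∑ a : Fin (m.val + 1), (univ.filter fun t => t m = a ∧ D t).card := by
      rw [Finset.card_eq_sum_card_fiberwise (f := fun t => t m) (t := univ) (fun _ _ => mem_univ _)]
      apply Finset.sum_congr rfl
      intro a _
      congr 1
      ext t
      simp only [mem_filter, mem_univ, true_and]
      tauto
    have hDcard : (univ.filter (D ·)).card
        = (m.val + 1) * (univ.filter fun t => t m = g t m ∧ D t).card := by
      rw [hsplit]
      rw [Finset.sum_congr rfl (fun a _ => key a)]
      simp [Finset.sum_const, Finset.card_univ]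
    -- assemble
    have hins : (univ.filter fun t : ∀ j : Fin N, Fin (j.val + 1) => ∀ k ∈ insert m s, t k = g t k)
        = (univ.filter fun t => t m = g t m ∧ D t) := by
      ext t
      simp only [mem_filter, mem_univ, true_and, Finset.mem_insert, hD]
      constructor
      · intro h; exact ⟨h m (Or.inl rfl), fun k hk => h k (Or.inr hk)⟩
      · rintro ⟨h1, h2⟩ k hk
        rcases hk with rfl | hk
        · exact h1
        · exact h2 k hk
    rw [hins]
    have hprod : ∏ k ∈ insert m s, (k.val + 1) = (m.val + 1) * ∏ k ∈ s, (k.val + 1) :=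
      Finset.prod_insert (fun h => absurd (hs m h) (lt_irrefl m))
    rw [hprod, ← ih]
    have hE : (univ.filter fun t : ∀ j : Fin N, Fin (j.val + 1) => ∀ k ∈ s, t k = g t k)
        = (univ.filter (D ·)) := rfl
    rw [hE, hDcard]
    ring

open scoped Classical

/-- Tuple-level activity predicate. -/
def ActT {N : ℕ} (x : Fin N) (t : ∀ j : Fin N, Fin (j.val + 1)) (k : Fin N) : Prop :=
  pheadT t k x = k ∨ pheadT t k x = emb k (t k)

lemma ActT_self {N : ℕ} (x : Fin N) (t : ∀ j : Fin N, Fin (j.val + 1)) :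
    ActT x t x := Or.inl (pheadT_fix t x x le_rfl)

lemma not_ActT_of_lt {N : ℕ} {x k : Fin N} (h : k < x) (t : ∀ j : Fin N, Fin (j.val + 1)) :
    ¬ ActT x t k := by
  rw [ActT, pheadT_fix t k x h.le]
  rintro (rfl | hx)
  · exact lt_irrefl _ h
  · have h1 : x.val = (t k).val := congrArg Fin.val hx
    have h2 : (t k).val < k.val + 1 := (t k).isLt
    have h3 : k.val < x.val := h
    omega

lemma ActT_iff_of_lt {N : ℕ} {x k : Fin N} (h : x < k) (t : ∀ j : Fin N, Fin (j.val + 1)) :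
    ActT x t k ↔ (t k).val = (pheadT t k x).val := by
  have hlt : pheadT t k x < k := pheadT_lt t k x h
  rw [ActT]
  constructor
  · rintro (he | he)
    · rw [he] at hlt; exact absurd hlt (lt_irrefl k)
    · exact (congrArg Fin.val he).symm
  · intro he
    exact Or.inr (Fin.ext he.symm)

open Finset in
lemma count_S {N : ℕ} (x : Fin N) (S : Finset (Fin N)) (hS : ∀ k' ∈ S, x ≤ k') :
    (univ.filter fun t : ∀ j : Fin N, Fin (j.val + 1) => ∀ k' ∈ S, ActT x t k').card
      * ∏ k ∈ S.filter (fun k' => x < k'), (k.val + 1) = N.factorial := by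
  have hbound : ∀ (t : ∀ j : Fin N, Fin (j.val + 1)) (j : Fin N),
      min (pheadT t j x).val j.val < j.val + 1 := by
    intro t j
    have := min_le_right (pheadT t j x).val j.val
    omega
  set g : (∀ j : Fin N, Fin (j.val + 1)) → ∀ j : Fin N, Fin (j.val + 1) :=
    fun t j => ⟨min (pheadT t j x).val j.val, hbound t j⟩ with hgdef
  have hg : ∀ (k : Fin N) t t', (∀ j, j < k → t j = t' j) → g t k = g t' k := by
    intro k t t' h
    simp only [hgdef, Fin.mk.injEq]
    rw [pheadT_congr k h]
  have hset : (univ.filter fun t : ∀ j : Fin N, Fin (j.val + 1) => ∀ k' ∈ S, ActT x t k')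
      = (univ.filter fun t => ∀ j ∈ S.filter (fun k' => x < k'), t j = g t j) := by
    ext t
    simp only [mem_filter, mem_univ, true_and]
    constructor
    · rintro h j ⟨hjS, hxj⟩
      have hact := h j hjS
      rw [ActT_iff_of_lt hxj] at hact
      have hlt : (pheadT t j x).val < j.val := pheadT_lt t j x hxj
      apply Fin.ext
      simp only [hgdef]
      omega
    · intro h k' hk'
      rcases eq_or_lt_of_le (hS k' hk') with rfl | hxk
      · exact ActT_self x t
      · have h1 := h k' ⟨hk', hxk⟩
        rw [ActT_iff_of_lt hxk]
        have hlt : (pheadT t k' x).val < k'.val := pheadT_lt t k' x hxk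
        have h2 : (t k').val = min (pheadT t k' x).val k'.val := congrArg Fin.val h1
        omega
  rw [hset]
  exact master _ g hg

open Finset in
lemma count_B {N : ℕ} (k : Fin N) (s : ∀ j : Fin N, Fin (j.val + 1)) :
    (univ.filter fun t : ∀ j : Fin N, Fin (j.val + 1) => ∀ j, j < k → t j = s j).card
      * ∏ j ∈ univ.filter (fun j => j < k), (j.val + 1) = N.factorial := by
  have hset : (univ.filter fun t : ∀ j : Fin N, Fin (j.val + 1) => ∀ j, j < k → t j = s j)
      = (univ.filter fun t => ∀ j ∈ univ.filter (fun j => j < k), t j = (fun _ => s) t j) := by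
    ext t
    simp only [mem_filter, mem_univ, true_and]
  rw [hset]
  exact master _ _ (fun _ _ _ _ => rfl)

open Finset in
lemma count_AB {N : ℕ} {x k : Fin N} (hxk : x < k) (s : ∀ j : Fin N, Fin (j.val + 1)) :
    (univ.filter fun t : ∀ j : Fin N, Fin (j.val + 1) =>
        ActT x t k ∧ ∀ j, j < k → t j = s j).card
      * ∏ j ∈ univ.filter (fun j => j ≤ k), (j.val + 1) = N.factorial := by
  have hbound : ∀ (t : ∀ j : Fin N, Fin (j.val + 1)) (j : Fin N),
      min (if j = k then (pheadT t k x).val else (s j).val) j.val < j.val + 1 := by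
    intro t j
    have := min_le_right (if j = k then (pheadT t k x).val else (s j).val) j.val
    omega
  set g : (∀ j : Fin N, Fin (j.val + 1)) → ∀ j : Fin N, Fin (j.val + 1) :=
    fun t j => ⟨min (if j = k then (pheadT t k x).val else (s j).val) j.val, hbound t j⟩
    with hgdef
  have hg : ∀ (j : Fin N) t t', (∀ i, i < j → t i = t' i) → g t j = g t' j := by
    intro j t t' h
    simp only [hgdef, Fin.mk.injEq]
    by_cases hj : j = k
    · subst hj
      rw [pheadT_congr j h]
    · simp [hj]
  have hset : (univ.filter fun t : ∀ j : Fin N, Fin (j.val + 1) =>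
        ActT x t k ∧ ∀ j, j < k → t j = s j)
      = (univ.filter fun t => ∀ j ∈ univ.filter (fun j => j ≤ k), t j = g t j) := by
    ext t
    simp only [mem_filter, mem_univ, true_and]
    constructor
    · rintro ⟨hact, hpre⟩ j hj
      rcases eq_or_lt_of_le hj with rfl | hjk
      · rw [ActT_iff_of_lt hxk] at hact
        have hlt : (pheadT t j x).val < j.val := pheadT_lt t j x hxk
        apply Fin.ext
        simp only [hgdef, if_pos rfl, ite_true, eq_self_iff_true]
        omega
      · have h1 := hpre j hjk
        apply Fin.ext
        have hjs : (t j).val = (s j).val := congrArg Fin.val h1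
        have hjlt : (s j).val < j.val + 1 := (s j).isLt
        simp only [hgdef, if_neg (ne_of_lt hjk)]
        omega
    · intro h
      constructor
      · have h1 := h k le_rfl
        rw [ActT_iff_of_lt hxk]
        have hval : (t k).val = min (pheadT t k x).val k.val := by
          have h2 := congrArg Fin.val h1
          simpa [hgdef] using h2
        have hlt : (pheadT t k x).val < k.val := pheadT_lt t k x hxk
        omega
      · intro j hjk
        have h1 := h j hjk.le
        apply Fin.ext
        have hval := congrArg Fin.val h1
        have hjlt : (s j).val < j.val + 1 := (s j).isLt
        simp only [hgdef, if_neg (ne_of_lt hjk)] at hval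
        omega
  rw [hset]
  exact master _ g hg



lemma bridge {N : ℕ} (π : Equiv.Perm (Fin N)) (x k : Fin N) :
    isActive π x k ↔ ActT x (tof π) k := Iff.rfl

open Finset in
lemma prob_single {N : ℕ} (x k : Fin N) :
    ((univ.filter fun π : Equiv.Perm (Fin N) => isActive π x k).card : ℝ) / (N.factorial : ℝ)
      = if x < k then 1 / ((k.val : ℝ) + 1) else if x = k then 1 else 0 := by
  have hNf : (N.factorial : ℝ) ≠ 0 := Nat.cast_ne_zero.mpr N.factorial_pos.ne'
  have htrans : (univ.filter fun π : Equiv.Perm (Fin N) => isActive π x k).card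
      = (univ.filter fun t : ∀ j : Fin N, Fin (j.val + 1) => ActT x t k).card :=
    card_transfer (fun t => ActT x t k)
  rcases lt_trichotomy x k with h | h | h
  · rw [if_pos h, htrans]
    have hc := count_S x {k} (by
      intro k' hk'; rw [Finset.mem_singleton] at hk'; subst hk'; exact h.le)
    have hfilt : ({k} : Finset (Fin N)).filter (fun k' => x < k') = {k} := by
      ext j; simp only [mem_filter, mem_singleton]
      exact ⟨fun h' => h'.1, fun h' => ⟨h', h' ▸ h⟩⟩
    rw [hfilt, Finset.prod_singleton] at hc
    have hset : (univ.filter fun t : ∀ j : Fin N, Fin (j.val + 1) =>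
          ∀ k' ∈ ({k} : Finset (Fin N)), ActT x t k')
        = (univ.filter fun t => ActT x t k) := by
      ext t; simp
    rw [hset] at hc
    rw [div_eq_div_iff hNf (by positivity), one_mul]
    exact_mod_cast hc
  · subst h
    rw [if_neg (lt_irrefl x), if_pos rfl, htrans]
    have hset : (univ.filter fun t : ∀ j : Fin N, Fin (j.val + 1) => ActT x t x) = univ := by
      rw [filter_true_of_mem]; intro t _; exact ActT_self x t
    rw [hset, card_univ, card_tuples, div_self hNf]
  · rw [if_neg (not_lt.mpr h.le), if_neg (ne_of_gt h), htrans]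
    have hset : (univ.filter fun t : ∀ j : Fin N, Fin (j.val + 1) => ActT x t k) = ∅ := by
      rw [filter_eq_empty_iff]; intro t _; exact not_ActT_of_lt h t
    rw [hset, card_empty, Nat.cast_zero, zero_div]

open Finset in
lemma prob_cond {N : ℕ} (x k : Fin N) (s : ∀ j : Fin N, Fin (j.val + 1)) :
    (((univ.filter fun π : Equiv.Perm (Fin N) =>
          isActive π x k ∧ ∀ j, j < k → tof π j = s j).card : ℝ) /
        ((univ.filter fun π : Equiv.Perm (Fin N) => ∀ j, j < k → tof π j = s j).card : ℝ))
      = if x < k then 1 / ((k.val : ℝ) + 1) else if x = k then 1 else 0 := by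
  have hNf : (N.factorial : ℝ) ≠ 0 := Nat.cast_ne_zero.mpr N.factorial_pos.ne'
  have htransB : (univ.filter fun π : Equiv.Perm (Fin N) => ∀ j, j < k → tof π j = s j).card
      = (univ.filter fun t : ∀ j : Fin N, Fin (j.val + 1) => ∀ j, j < k → t j = s j).card :=
    card_transfer (fun t => ∀ j, j < k → t j = s j)
  have htransAB : (univ.filter fun π : Equiv.Perm (Fin N) =>
        isActive π x k ∧ ∀ j, j < k → tof π j = s j).card
      = (univ.filter fun t : ∀ j : Fin N, Fin (j.val + 1) =>
          ActT x t k ∧ ∀ j, j < k → t j = s j).card :=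
    card_transfer (fun t => ActT x t k ∧ ∀ j, j < k → t j = s j)
  have hB := count_B k s
  have hP1pos : 0 < ∏ j ∈ univ.filter (fun j : Fin N => j < k), (j.val + 1) :=
    prod_pos (fun j _ => Nat.succ_pos j.val)
  have hBpos : 0 < (univ.filter fun t : ∀ j : Fin N, Fin (j.val + 1) =>
      ∀ j, j < k → t j = s j).card := by
    apply Nat.pos_of_ne_zero
    intro h0
    rw [h0, zero_mul] at hB
    exact N.factorial_pos.ne hB
  rcases lt_trichotomy x k with h | h | h
  · rw [if_pos h, htransB, htransAB]
    have hAB := count_AB h s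
    have hsplit : (univ.filter (fun j : Fin N => j ≤ k))
        = insert k (univ.filter (fun j => j < k)) := by
      ext j
      simp only [mem_filter, mem_univ, true_and, Finset.mem_insert]
      rw [le_iff_lt_or_eq]
      tauto
    have hprod : ∏ j ∈ univ.filter (fun j : Fin N => j ≤ k), (j.val + 1)
        = (k.val + 1) * ∏ j ∈ univ.filter (fun j : Fin N => j < k), (j.val + 1) := by
      rw [hsplit, prod_insert (by simp)]
    rw [hprod] at hAB
    have hkey : (univ.filter fun t : ∀ j : Fin N, Fin (j.val + 1) =>
          ActT x t k ∧ ∀ j, j < k → t j = s j).card * (k.val + 1)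
        = (univ.filter fun t : ∀ j : Fin N, Fin (j.val + 1) => ∀ j, j < k → t j = s j).card := by
      apply Nat.eq_of_mul_eq_mul_right hP1pos
      rw [mul_assoc, hAB, hB]
    have hBne : ((univ.filter fun t : ∀ j : Fin N, Fin (j.val + 1) =>
        ∀ j, j < k → t j = s j).card : ℝ) ≠ 0 := by
      exact_mod_cast hBpos.ne'
    rw [div_eq_div_iff hBne (by positivity), one_mul]
    exact_mod_cast hkey
  · subst h
    rw [if_neg (lt_irrefl x), if_pos rfl]
    have hall : ∀ π : Equiv.Perm (Fin N), isActive π x x :=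
      fun π => (bridge π x x).mpr (ActT_self x (tof π))
    have hset : (univ.filter fun π : Equiv.Perm (Fin N) =>
          isActive π x x ∧ ∀ j, j < x → tof π j = s j)
        = (univ.filter fun π : Equiv.Perm (Fin N) => ∀ j, j < x → tof π j = s j) := by
      ext π
      simp only [mem_filter, mem_univ, true_and]
      exact ⟨fun h' => h'.2, fun h' => ⟨hall π, h'⟩⟩
    rw [hset]
    apply div_self
    rw [htransB]
    exact_mod_cast hBpos.ne'
  · rw [if_neg (not_lt.mpr h.le), if_neg (ne_of_gt h)]
    have hset : (univ.filter fun π : Equiv.Perm (Fin N) =>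
          isActive π x k ∧ ∀ j, j < k → tof π j = s j) = ∅ := by
      rw [filter_eq_empty_iff]
      intro π _
      rintro ⟨hact, -⟩
      exact not_ActT_of_lt h (tof π) ((bridge π x k).mp hact)
    rw [hset, card_empty, Nat.cast_zero, zero_div]

open Finset in
lemma prob_indep {N : ℕ} (x : Fin N) (S : Finset (Fin N)) :
    ((univ.filter fun π : Equiv.Perm (Fin N) => ∀ k' ∈ S, isActive π x k').card : ℝ) /
        (N.factorial : ℝ)
      = ∏ k' ∈ S, ((univ.filter fun π : Equiv.Perm (Fin N) => isActive π x k').card : ℝ) /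
          (N.factorial : ℝ) := by
  have hNf : (N.factorial : ℝ) ≠ 0 := Nat.cast_ne_zero.mpr N.factorial_pos.ne'
  by_cases hS : ∀ k' ∈ S, x ≤ k'
  · have htrans : (univ.filter fun π : Equiv.Perm (Fin N) => ∀ k' ∈ S, isActive π x k').card
        = (univ.filter fun t : ∀ j : Fin N, Fin (j.val + 1) => ∀ k' ∈ S, ActT x t k').card :=
      card_transfer (fun t => ∀ k' ∈ S, ActT x t k')
    have hc := count_S x S hS
    have hRHS : (∏ k' ∈ S, ((univ.filter fun π : Equiv.Perm (Fin N) =>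
          isActive π x k').card : ℝ) / (N.factorial : ℝ))
        = ∏ k' ∈ S.filter (fun k' => x < k'), (1 / ((k'.val : ℝ) + 1)) := by
      rw [← prod_filter_mul_prod_filter_not S (fun k' => x < k')]
      have h1 : ∀ k' ∈ S.filter (fun k' => x < k'),
          ((univ.filter fun π : Equiv.Perm (Fin N) => isActive π x k').card : ℝ) /
            (N.factorial : ℝ) = 1 / ((k'.val : ℝ) + 1) := by
        intro k' hk'
        rw [mem_filter] at hk'
        rw [prob_single x k', if_pos hk'.2]
      have h2 : ∀ k' ∈ S.filter (fun k' => ¬ x < k'),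
          ((univ.filter fun π : Equiv.Perm (Fin N) => isActive π x k').card : ℝ) /
            (N.factorial : ℝ) = 1 := by
        intro k' hk'
        rw [mem_filter] at hk'
        have hx : x = k' := le_antisymm (hS k' hk'.1) (not_lt.mp hk'.2)
        rw [prob_single x k', if_neg (by rw [hx]; exact lt_irrefl k'), if_pos hx]
      rw [prod_congr rfl h1, prod_congr rfl h2, prod_const_one, mul_one]
    rw [htrans, hRHS]
    have hPpos : (0 : ℝ) < ∏ k' ∈ S.filter (fun k' => x < k'), ((k'.val : ℝ) + 1) :=
      prod_pos (by intros; positivity)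
    have hprodinv : (∏ k' ∈ S.filter (fun k' => x < k'), (1 / ((k'.val : ℝ) + 1)))
        = 1 / ∏ k' ∈ S.filter (fun k' => x < k'), ((k'.val : ℝ) + 1) := by
      rw [one_div, ← prod_inv_distrib]
      simp [one_div]
    rw [hprodinv, div_eq_div_iff hNf hPpos.ne', one_mul]
    exact_mod_cast hc
  · push_neg at hS
    obtain ⟨k₀, hk₀S, hk₀⟩ := hS
    have hset : (univ.filter fun π : Equiv.Perm (Fin N) => ∀ k' ∈ S, isActive π x k') = ∅ := by
      rw [filter_eq_empty_iff]
      intro π _ hall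
      exact not_ActT_of_lt hk₀ (tof π) ((bridge π x k₀).mp (hall k₀ hk₀S))
    rw [hset, card_empty, Nat.cast_zero, zero_div]
    symm
    apply prod_eq_zero hk₀S
    rw [prob_single x k₀, if_neg (asymm hk₀), if_neg (ne_of_gt hk₀)]


/-- Fix `x, k ∈ [N]` and numbers `s_j ∈ [j]` for `j < k`.  For uniformly
random `π ∈ S_N`, the conditional probability `Pr(k ∈ A(π,x) | t_j(π) = s_j ∀ j < k)` equals
`1/k` if `x < k`, `1` if `x = k`, `0` if `x > k`; the unconditional probability takes the
same values; and the events `{k ∈ A(π,x)}`, `k ∈ [N]`, are mutually independent. -/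
theorem stmt6 {N : ℕ} (hN : 1 ≤ N) (x k : Fin N) (s : ∀ j : Fin N, Fin (j.val + 1)) :
    (((Finset.univ.filter fun π : Equiv.Perm (Fin N) =>
          isActive π x k ∧ ∀ j, j < k → tof π j = s j).card : ℝ) /
        ((Finset.univ.filter fun π : Equiv.Perm (Fin N) => ∀ j, j < k → tof π j = s j).card : ℝ)
        = if x < k then 1 / ((k.val : ℝ) + 1) else if x = k then 1 else 0)
    ∧ (((Finset.univ.filter fun π : Equiv.Perm (Fin N) => isActive π x k).card : ℝ) /
          (N.factorial : ℝ)
        = if x < k then 1 / ((k.val : ℝ) + 1) else if x = k then 1 else 0)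
    ∧ ∀ S : Finset (Fin N),
        ((Finset.univ.filter fun π : Equiv.Perm (Fin N) => ∀ k' ∈ S, isActive π x k').card : ℝ) /
            (N.factorial : ℝ)
          = ∏ k' ∈ S,
              ((Finset.univ.filter fun π : Equiv.Perm (Fin N) => isActive π x k').card : ℝ) /
                (N.factorial : ℝ) := by
  exact ⟨prob_cond x k s, prob_single x k, prob_indep x⟩
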